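/- Let ε > 0, L > 0, λ > 0, and let ψ be a standing-wave profile for parameters ε, L, λ that is strictly positive on ℝ. Then the operator L₋ associated with ψ has no positive eigenvalues: there is no μ > 0 admitting a nonzero continuous function q : ℝ → ℝ with q(x) → 0 as x → ±∞, twice differentiable on ℝ \ {−L, L}, satisfying q''(x) + 2ψ(x)²q(x) − λ²q(x) = μ·q(x) there, with one-sided derivative jumps q'(x⁺) − q'(x⁻) = −ε·q(x) at x = ±L. -/

import Mathlib

open Filter Topology Set

/-- A standing-wave profile for the double delta-well Gross–Pitaevskii equation with
parameters `ε, L, lam`: `ψ` is continuous, decays at `±∞`, has derivative `ψ'` and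
satisfies `ψ'' = lam² ψ - 2 ψ³` away from `±L`, and the one-sided limits of `ψ'` at
`±L` exist and jump by `-ε ψ`. -/
def IsStandingWaveProfile (ε L lam : ℝ) (ψ ψ' : ℝ → ℝ) : Prop :=
  Continuous ψ ∧
  Tendsto ψ atTop (𝓝 0) ∧ Tendsto ψ atBot (𝓝 0) ∧
  (∀ x : ℝ, x ≠ L → x ≠ -L →
    HasDerivAt ψ (ψ' x) x ∧
    HasDerivAt ψ' (lam ^ 2 * ψ x - 2 * ψ x ^ 3) x) ∧
  (∀ x : ℝ, x = L ∨ x = -L →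
    ∃ a b : ℝ,
      Tendsto ψ' (𝓝[>] x) (𝓝 a) ∧
      Tendsto ψ' (𝓝[<] x) (𝓝 b) ∧
      a - b = -ε * ψ x)

/- ## Auxiliary lemmas -/

lemma ev_ne_left (v p : ℝ) : ∀ᶠ x in 𝓝[<] v, x ≠ p := by
  rcases eq_or_ne v p with rfl | h
  · exact eventually_nhdsWithin_of_forall fun x hx => ne_of_lt hx
  · exact Filter.Eventually.filter_mono nhdsWithin_le_nhds (eventually_ne_nhds h)

lemma ev_ne_right (v p : ℝ) : ∀ᶠ x in 𝓝[>] v, x ≠ p := by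
  rcases eq_or_ne v p with rfl | h
  · exact eventually_nhdsWithin_of_forall fun x hx => ne_of_gt hx
  · exact Filter.Eventually.filter_mono nhdsWithin_le_nhds (eventually_ne_nhds h)

lemma tendsto_neg_gt (u : ℝ) : Tendsto (fun x : ℝ => -x) (𝓝[>] u) (𝓝[<] (-u)) := by
  apply tendsto_nhdsWithin_of_tendsto_nhds_of_eventually_within
  · exact (continuous_neg.tendsto u).mono_left nhdsWithin_le_nhds
  · exact eventually_nhdsWithin_of_forall fun x hx => by
      simp only [Set.mem_Ioi] at hx
      simp only [Set.mem_Iio]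
      linarith

lemma tendsto_neg_lt (u : ℝ) : Tendsto (fun x : ℝ => -x) (𝓝[<] u) (𝓝[>] (-u)) := by
  apply tendsto_nhdsWithin_of_tendsto_nhds_of_eventually_within
  · exact (continuous_neg.tendsto u).mono_left nhdsWithin_le_nhds
  · exact eventually_nhdsWithin_of_forall fun x hx => by
      simp only [Set.mem_Iio] at hx
      simp only [Set.mem_Ioi]
      linarith

/-- Strict increase of a continuous function with positive derivative away
from a finite exceptional set. -/
lemma inc_except (s : Finset ℝ) (f : ℝ → ℝ) :
    ∀ a b : ℝ, a < b → ContinuousOn f (Icc a b) →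
      (∀ x ∈ Ioo a b, x ∉ s → ∃ d, 0 < d ∧ HasDerivAt f d x) → f a < f b := by
  classical
  induction s using Finset.induction_on with
  | empty =>
    intro a b hab hc hd
    have hmono : StrictMonoOn f (Icc a b) := by
      apply strictMonoOn_of_deriv_pos (convex_Icc a b) hc
      intro x hx
      rw [interior_Icc] at hx
      obtain ⟨d, hd0, hdd⟩ := hd x hx (Finset.notMem_empty x)
      rwa [hdd.deriv]
    exact hmono (left_mem_Icc.2 hab.le) (right_mem_Icc.2 hab.le) hab
  | insert p t hpt ih =>
    intro a b hab hc hd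
    by_cases hmem : p ∈ Ioo a b
    · have h1 : f a < f p := by
        refine ih a p hmem.1 (hc.mono (Icc_subset_Icc le_rfl hmem.2.le)) ?_
        intro x hx hxt
        refine hd x ⟨hx.1, hx.2.trans hmem.2⟩ ?_
        rw [Finset.mem_insert]
        push_neg
        exact ⟨ne_of_lt hx.2, hxt⟩
      have h2 : f p < f b := by
        refine ih p b hmem.2 (hc.mono (Icc_subset_Icc hmem.1.le le_rfl)) ?_
        intro x hx hxt
        refine hd x ⟨hmem.1.trans hx.1, hx.2⟩ ?_
        rw [Finset.mem_insert]
        push_neg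
        exact ⟨ne_of_gt hx.1, hxt⟩
      exact h1.trans h2
    · refine ih a b hab hc ?_
      intro x hx hxt
      refine hd x hx ?_
      rw [Finset.mem_insert]
      push_neg
      exact ⟨fun hxp => hmem (hxp ▸ hx), hxt⟩

lemma anti_Ici {f f' : ℝ → ℝ} {y : ℝ}
    (hd : ∀ x ∈ Ici y, HasDerivAt f (f' x) x) (h0 : ∀ x ∈ Ioi y, f' x ≤ 0) :
    ∀ x ∈ Ici y, f x ≤ f y := by
  have hanti : AntitoneOn f (Ici y) := by
    apply antitoneOn_of_deriv_nonpos (convex_Ici y)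
      (fun x hx => (hd x hx).continuousAt.continuousWithinAt)
    · intro x hx
      rw [interior_Ici] at hx
      exact (hd x (Set.mem_Ici.2 (le_of_lt (Set.mem_Ioi.1 hx)))).differentiableAt.differentiableWithinAt
    · intro x hx
      rw [interior_Ici] at hx
      rw [(hd x (Set.mem_Ici.2 (le_of_lt (Set.mem_Ioi.1 hx)))).deriv]
      exact h0 x hx
  exact fun x hx => hanti self_mem_Ici hx hx

lemma mono_Ici {f f' : ℝ → ℝ} {y : ℝ}
    (hd : ∀ x ∈ Ici y, HasDerivAt f (f' x) x) (h0 : ∀ x ∈ Ioi y, 0 ≤ f' x) :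
    ∀ x ∈ Ici y, f y ≤ f x := by
  have := anti_Ici (f := fun x => -f x) (f' := fun x => -f' x)
    (fun x hx => (hd x hx).neg) (fun x hx => neg_nonpos.2 (h0 x hx))
  intro x hx
  have h2 := this x hx
  simp only [neg_le_neg_iff] at h2
  linarith

lemma lin_le {f f' : ℝ → ℝ} {y c : ℝ}
    (hd : ∀ x ∈ Ici y, HasDerivAt f (f' x) x) (h : ∀ x ∈ Ioi y, f' x ≤ c) :
    ∀ x ∈ Ici y, f x ≤ f y + c * (x - y) := by
  have := anti_Ici (f := fun x => f x - c * x) (f' := fun x => f' x - c)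
    (fun x hx => (hd x hx).sub (by simpa using (hasDerivAt_id x).const_mul c))
    (fun x hx => sub_nonpos.2 (h x hx))
  intro x hx
  have h2 := this x hx
  linarith

/-- The standing wave satisfies `ψ' ≥ -lam ψ` to the right of `L`. -/
lemma psi_slope (L lam : ℝ) (hL : 0 < L) (hlam : 0 < lam) (ψ ψ' : ℝ → ℝ)
    (hψd : ∀ x : ℝ, x ≠ L → x ≠ -L →
      HasDerivAt ψ (ψ' x) x ∧ HasDerivAt ψ' (lam ^ 2 * ψ x - 2 * ψ x ^ 3) x)
    (hpos : ∀ x, 0 < ψ x) :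
    ∀ y, L < y → -lam * ψ y ≤ ψ' y := by
  intro y hy
  by_contra hcon
  push_neg at hcon
  set u : ℝ → ℝ := fun x => ψ' x + lam * ψ x with hu
  have huy : u y < 0 := by simp only [hu]; linarith
  have hne : ∀ x : ℝ, y ≤ x → x ≠ L ∧ x ≠ -L :=
    fun x hx => ⟨ne_of_gt (by linarith), ne_of_gt (by linarith)⟩
  have hdu : ∀ x ∈ Ici y, HasDerivAt u (lam ^ 2 * ψ x - 2 * ψ x ^ 3 + lam * ψ' x) x := by
    intro x hx
    exact ((hψd x (hne x hx).1 (hne x hx).2).2.add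
      ((hψd x (hne x hx).1 (hne x hx).2).1.const_mul lam))
  set F : ℝ → ℝ := fun x => Real.exp (-(lam * x)) * u x with hF
  have hdF : ∀ x ∈ Ici y, HasDerivAt F
      (Real.exp (-(lam * x)) * (-lam) * u x +
        Real.exp (-(lam * x)) * (lam ^ 2 * ψ x - 2 * ψ x ^ 3 + lam * ψ' x)) x := by
    intro x hx
    have h1 : HasDerivAt (fun x : ℝ => -(lam * x)) (-lam) x := by
      exact (show HasDerivAt (fun x : ℝ => lam * x) lam x by
        simpa using (hasDerivAt_id x).const_mul lam).neg
    have h2 : HasDerivAt (fun x : ℝ => Real.exp (-(lam * x)))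
        (Real.exp (-(lam * x)) * (-lam)) x := (Real.hasDerivAt_exp _).comp x h1
    exact h2.mul (hdu x hx)
  have hFanti := anti_Ici hdF (fun x hx => by
    have hexp : 0 < Real.exp (-(lam * x)) := Real.exp_pos _
    have hψx := hpos x
    have : Real.exp (-(lam * x)) * (-lam) * u x +
        Real.exp (-(lam * x)) * (lam ^ 2 * ψ x - 2 * ψ x ^ 3 + lam * ψ' x)
        = Real.exp (-(lam * x)) * (-(2 * ψ x ^ 3)) := by
      simp only [hu]; ring
    rw [this]
    have : 0 < ψ x ^ 3 := by positivity
    nlinarith)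
  have hux : ∀ x ∈ Ici y, u x ≤ u y := by
    intro x hx
    have h1 := hFanti x hx
    simp only [hF] at h1
    have h2 : Real.exp (-(lam * x)) ≤ Real.exp (-(lam * y)) := by
      apply Real.exp_le_exp.2
      have : y ≤ x := hx
      nlinarith
    have h3 : Real.exp (-(lam * y)) * u y ≤ Real.exp (-(lam * x)) * u y := by
      nlinarith
    have h4 : Real.exp (-(lam * x)) * u x ≤ Real.exp (-(lam * x)) * u y := le_trans h1 h3
    exact le_of_mul_le_mul_left h4 (Real.exp_pos _)
  have hψ'le : ∀ x ∈ Ioi y, ψ' x ≤ u y := by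
    intro x hx
    have h1 := hux x (Set.mem_Ici.2 (le_of_lt (Set.mem_Ioi.1 hx)))
    have h2 := hpos x
    simp only [hu] at h1 ⊢
    nlinarith
  have hlin := lin_le (fun x hx => (hψd x (hne x hx).1 (hne x hx).2).1) hψ'le
  have hne0 : u y ≠ 0 := ne_of_lt huy
  have ht : 0 < (ψ y + 1) / (-u y) := by
    apply div_pos
    · linarith [hpos y]
    · linarith
  have h5 := hlin (y + (ψ y + 1) / (-u y)) (by simp only [Set.mem_Ici]; linarith)
  rw [add_sub_cancel_left] at h5
  have hnu : -u y ≠ 0 := neg_ne_zero.mpr hne0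
  have h7 : u y * ((ψ y + 1) / (-u y)) = -(ψ y + 1) := by
    rw [mul_div_assoc', div_eq_iff hnu]
    ring
  nlinarith [hpos (y + (ψ y + 1) / (-u y)), h5, h7]

/-- A positive solution of `q'' ≥ k² q` on `[R, ∞)` tending to `0` satisfies
`q' + k q ≤ 0` there. -/
lemma decay_slope (k R : ℝ) (hk : 0 < k) (q q' h : ℝ → ℝ)
    (hqd : ∀ x ∈ Ici R, HasDerivAt q (q' x) x ∧ HasDerivAt q' (h x) x)
    (hh : ∀ x ∈ Ici R, k ^ 2 * q x ≤ h x)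
    (hqpos : ∀ x ∈ Ici R, 0 < q x)
    (hqtop : Tendsto q atTop (𝓝 0)) :
    ∀ x ∈ Ici R, q' x + k * q x ≤ 0 := by
  intro y hy
  by_contra hcon
  push_neg at hcon
  set w : ℝ → ℝ := fun x => q' x + k * q x with hw
  have hwy : 0 < w y := hcon
  have hsub : Ici y ⊆ Ici R := Ici_subset_Ici.2 hy
  have hdw : ∀ x ∈ Ici y, HasDerivAt w (h x + k * q' x) x := by
    intro x hx
    exact ((hqd x (hsub hx)).2.add ((hqd x (hsub hx)).1.const_mul k))
  set F : ℝ → ℝ := fun x => Real.exp (-(k * x)) * w x with hF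
  have hdF : ∀ x ∈ Ici y, HasDerivAt F
      (Real.exp (-(k * x)) * (-k) * w x + Real.exp (-(k * x)) * (h x + k * q' x)) x := by
    intro x hx
    have h1 : HasDerivAt (fun x : ℝ => -(k * x)) (-k) x := by
      exact (show HasDerivAt (fun x : ℝ => k * x) k x by
        simpa using (hasDerivAt_id x).const_mul k).neg
    have h2 : HasDerivAt (fun x : ℝ => Real.exp (-(k * x)))
        (Real.exp (-(k * x)) * (-k)) x := (Real.hasDerivAt_exp _).comp x h1
    exact h2.mul (hdw x hx)
  have hFmono := mono_Ici hdF (fun x hx => by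
    have hexp : 0 < Real.exp (-(k * x)) := Real.exp_pos _
    have h1 : Real.exp (-(k * x)) * (-k) * w x + Real.exp (-(k * x)) * (h x + k * q' x)
        = Real.exp (-(k * x)) * (h x - k ^ 2 * q x) := by
      simp only [hw]; ring
    rw [h1]
    have h2 := hh x (hsub (Set.mem_Ici.2 (le_of_lt (Set.mem_Ioi.1 hx))))
    nlinarith)
  have hwx : ∀ x ∈ Ici y, w y ≤ w x := by
    intro x hx
    have h1 := hFmono x hx
    simp only [hF] at h1
    have h2 : Real.exp (-(k * x)) ≤ Real.exp (-(k * y)) := by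
      apply Real.exp_le_exp.2
      have : y ≤ x := hx
      nlinarith
    have h3 : Real.exp (-(k * x)) * w y ≤ Real.exp (-(k * y)) * w y := by
      nlinarith
    have h4 : Real.exp (-(k * x)) * w y ≤ Real.exp (-(k * x)) * w x := le_trans h3 h1
    exact le_of_mul_le_mul_left h4 (Real.exp_pos _)
  -- eventually q is small
  have hsmall : ∀ᶠ x in atTop, q x < w y / (2 * k) := by
    have := Metric.tendsto_nhds.mp hqtop (w y / (2 * k)) (by positivity)
    filter_upwards [this] with x hx
    rw [Real.dist_eq, sub_zero] at hx
    exact lt_of_le_of_lt (le_abs_self _) hx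
  obtain ⟨y₂', hy₂'⟩ := eventually_atTop.1 hsmall
  set y₂ := max y y₂' with hy₂def
  have hy₂y : y ≤ y₂ := le_max_left _ _
  have hq' : ∀ x ∈ Ioi y₂, w y / 2 ≤ q' x := by
    intro x hx
    have hxy : y ≤ x := le_trans hy₂y (le_of_lt hx)
    have h1 := hwx x hxy
    have h2 := hy₂' x (le_trans (le_max_right _ _) (le_of_lt hx))
    simp only [hw] at h1
    have h3 : k * q x < k * (w y / (2 * k)) := by
      exact mul_lt_mul_of_pos_left h2 hk
    have h4 : k * (w y / (2 * k)) = w y / 2 := by field_simp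
    nlinarith
  -- linear growth of q beyond y₂, contradiction with decay
  have hlin := lin_le (f := fun x => -q x) (f' := fun x => -q' x) (y := y₂)
    (c := -(w y / 2))
    (fun x hx => (hqd x (hsub (le_trans hy₂y hx))).1.neg)
    (fun x hx => by have := hq' x hx; linarith)
  have hq1 : ∀ᶠ x in atTop, q x < 1 := by
    have := Metric.tendsto_nhds.mp hqtop 1 one_pos
    filter_upwards [this] with x hx
    rw [Real.dist_eq, sub_zero] at hx
    exact lt_of_le_of_lt (le_abs_self _) hx
  obtain ⟨y₃, hy₃⟩ := eventually_atTop.1 hq1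
  set x := max y₃ (y₂ + 2 / (w y) + 2) with hxdef
  have hxy₂ : y₂ ≤ x := by
    have h1 : (0:ℝ) < 2 / w y := by positivity
    have := le_max_right y₃ (y₂ + 2 / (w y) + 2)
    linarith
  have h5' := hlin x hxy₂
  have h5 : -q x ≤ -q y₂ + -(w y / 2) * (x - y₂) := h5'
  have h6 : q x ≥ q y₂ + (w y / 2) * (x - y₂) := by nlinarith
  have h7 : q y₂ > 0 := hqpos y₂ (le_trans hy (le_trans hy₂y le_rfl))
  have h8 : x - y₂ ≥ 2 / w y := by
    have := le_max_right y₃ (y₂ + 2 / (w y) + 2)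
    linarith
  have h9 : (w y / 2) * (2 / w y) = 1 := by field_simp
  have h10 : q x < 1 := hy₃ x (le_max_left _ _)
  have h11 : (w y / 2) * (x - y₂) ≥ 1 := by
    calc (w y / 2) * (x - y₂) ≥ (w y / 2) * (2 / w y) := by
          apply mul_le_mul_of_nonneg_left h8 (by positivity)
      _ = 1 := h9
  linarith

/-- Key half-line lemma: to the right of a point where `q > 0`, either `q` has a
first zero, or we can go far out; in both cases we find `v` with `q > 0` on
`[x₀, v)` and the Wronskian `ψ q' - ψ' q` having a nonpositive left limit at `v`. -/
lemma aux_right (L lam μ : ℝ) (hL : 0 < L) (hlam : 0 < lam) (hμ : 0 < μ)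
    (ψ ψ' q q' : ℝ → ℝ)
    (hψc : Continuous ψ) (hψtop : Tendsto ψ atTop (𝓝 0))
    (hψd : ∀ x : ℝ, x ≠ L → x ≠ -L →
      HasDerivAt ψ (ψ' x) x ∧ HasDerivAt ψ' (lam ^ 2 * ψ x - 2 * ψ x ^ 3) x)
    (hψj : ∀ x : ℝ, x = L ∨ x = -L → ∃ b, Tendsto ψ' (𝓝[<] x) (𝓝 b))
    (hpos : ∀ x, 0 < ψ x)
    (hqc : Continuous q) (hqtop : Tendsto q atTop (𝓝 0))
    (hqd : ∀ x : ℝ, x ≠ L → x ≠ -L →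
      HasDerivAt q (q' x) x ∧
      HasDerivAt q' (μ * q x + lam ^ 2 * q x - 2 * ψ x ^ 2 * q x) x)
    (hqj : ∀ x : ℝ, x = L ∨ x = -L → ∃ b, Tendsto q' (𝓝[<] x) (𝓝 b))
    (x₀ : ℝ) (hx₀ : 0 < q x₀) :
    ∃ v, x₀ < v ∧ (∀ x ∈ Ico x₀ v, 0 < q x) ∧
      ∃ c ≤ 0, Tendsto (fun x => ψ x * q' x - ψ' x * q x) (𝓝[<] v) (𝓝 c) := by
  by_cases hZ : ∃ z, x₀ ≤ z ∧ q z = 0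
  · -- there is a zero to the right
    set Z : Set ℝ := {z : ℝ | x₀ ≤ z ∧ q z = 0} with hZdef
    have hZne : Z.Nonempty := hZ
    have hZc : IsClosed Z := by
      have : Z = Ici x₀ ∩ q ⁻¹' {0} := by
        ext z; simp [hZdef]
      rw [this]
      exact isClosed_Ici.inter (isClosed_singleton.preimage hqc)
    have hbdd : BddBelow Z := ⟨x₀, fun z hz => hz.1⟩
    set v := sInf Z with hvdef
    have hvZ : v ∈ Z := hZc.csInf_mem hZne hbdd
    have hqv : q v = 0 := hvZ.2
    have hx₀v : x₀ < v := by
      rcases lt_or_eq_of_le hvZ.1 with h | h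
      · exact h
      · exfalso; rw [← h] at hqv; linarith
    have hIco : ∀ x ∈ Ico x₀ v, 0 < q x := by
      intro x hx
      rcases lt_trichotomy (q x) 0 with hneg | h0 | hposx
      · exfalso
        obtain ⟨z, hz, hz0⟩ := intermediate_value_Icc' hx.1 hqc.continuousOn
          ⟨hneg.le, hx₀.le⟩
        have hzZ : z ∈ Z := ⟨hz.1, hz0⟩
        have := csInf_le hbdd hzZ
        have := hx.2
        have := hz.2
        simp only [← hvdef] at *
        linarith
      · exfalso
        have hxZ : x ∈ Z := ⟨hx.1, h0⟩
        have := csInf_le hbdd hxZ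
        have := hx.2
        linarith
      · exact hposx
    have hbqe : ∃ b, Tendsto q' (𝓝[<] v) (𝓝 b) := by
      by_cases hv : v = L ∨ v = -L
      · exact hqj v hv
      · push_neg at hv
        exact ⟨q' v, (hqd v hv.1 hv.2).2.continuousAt.continuousWithinAt⟩
    have hbψe : ∃ b, Tendsto ψ' (𝓝[<] v) (𝓝 b) := by
      by_cases hv : v = L ∨ v = -L
      · exact hψj v hv
      · push_neg at hv
        exact ⟨ψ' v, (hψd v hv.1 hv.2).2.continuousAt.continuousWithinAt⟩
    obtain ⟨bq, hbq⟩ := hbqe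
    obtain ⟨bψ, hbψ⟩ := hbψe
    have hbq0 : bq ≤ 0 := by
      by_contra hb
      push_neg at hb
      have hev : ∀ᶠ x in 𝓝[<] v, bq / 2 < q' x ∧ x ≠ L ∧ x ≠ -L := by
        filter_upwards [hbq.eventually (eventually_gt_nhds (by linarith : bq / 2 < bq)),
          ev_ne_left v L, ev_ne_left v (-L)] with x h1 h2 h3
        exact ⟨h1, h2, h3⟩
      obtain ⟨l, hl, hIoo⟩ := mem_nhdsLT_iff_exists_Ioo_subset.1 hev
      set a' := max l x₀ with ha'def
      have ha'v : a' < v := max_lt hl hx₀v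
      have hqa' : 0 < q a' := hIco a' ⟨le_max_right _ _, ha'v⟩
      have hlt : q a' < q v := by
        refine inc_except ∅ q a' v ha'v hqc.continuousOn ?_
        intro x hx _
        have hxl : l < x := lt_of_le_of_lt (le_max_left l x₀) hx.1
        have hmem := hIoo ⟨hxl, hx.2⟩
        exact ⟨q' x, by linarith [hmem.1], (hqd x hmem.2.1 hmem.2.2).1⟩
      rw [hqv] at hlt
      linarith
    refine ⟨v, hx₀v, hIco, ψ v * bq, ?_, ?_⟩
    · have := mul_le_mul_of_nonneg_left hbq0 (hpos v).le
      simpa using this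
    · have h1 : Tendsto ψ (𝓝[<] v) (𝓝 (ψ v)) := hψc.continuousAt.continuousWithinAt
      have h2 : Tendsto q (𝓝[<] v) (𝓝 (q v)) := hqc.continuousAt.continuousWithinAt
      have h3 := (h1.mul hbq).sub (hbψ.mul h2)
      rw [hqv] at h3
      simpa using h3
  · -- no zero to the right of x₀
    push_neg at hZ
    have hqpos : ∀ x, x₀ ≤ x → 0 < q x := by
      intro x hx
      rcases lt_trichotomy (q x) 0 with hneg | h0 | hp
      · exfalso
        obtain ⟨z, hz, hz0⟩ := intermediate_value_Icc' hx hqc.continuousOn ⟨hneg.le, hx₀.le⟩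
        exact hZ z hz.1 hz0
      · exact absurd h0 (hZ x hx)
      · exact hp
    have hev : ∀ᶠ x in atTop, 2 * ψ x ^ 2 ≤ μ / 2 := by
      have h2 := Metric.tendsto_nhds.mp hψtop (Real.sqrt (μ / 4))
        (Real.sqrt_pos.2 (by linarith))
      filter_upwards [h2] with x hx
      rw [Real.dist_eq, sub_zero] at hx
      have h4 : |ψ x| * |ψ x| < Real.sqrt (μ / 4) * Real.sqrt (μ / 4) :=
        mul_self_lt_mul_self (abs_nonneg _) hx
      have h5 : Real.sqrt (μ / 4) * Real.sqrt (μ / 4) = μ / 4 :=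
        Real.mul_self_sqrt (by linarith)
      have h6 : ψ x * ψ x = |ψ x| * |ψ x| := (abs_mul_abs_self _).symm
      have h7 : ψ x ^ 2 = ψ x * ψ x := sq (ψ x)
      linarith
    obtain ⟨R₀, hR₀⟩ := eventually_atTop.1 hev
    set R := max (max x₀ R₀) L + 1 with hRdef
    have hRL : L < R := by
      have := le_max_right (max x₀ R₀) L
      linarith
    have hRx₀ : x₀ < R := by
      have h1 := le_max_left x₀ R₀
      have h2 := le_max_left (max x₀ R₀) L
      linarith
    have hRR₀ : R₀ ≤ R := by
      have h1 := le_max_right x₀ R₀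
      have h2 := le_max_left (max x₀ R₀) L
      linarith
    set k := Real.sqrt (lam ^ 2 + μ / 2) with hkdef
    have hk2 : k ^ 2 = lam ^ 2 + μ / 2 := Real.sq_sqrt (by positivity)
    have hk0 : 0 < k := Real.sqrt_pos.2 (by positivity)
    have hklam : lam < k := by
      have h1 : lam = Real.sqrt (lam ^ 2) := (Real.sqrt_sq hlam.le).symm
      rw [h1, hkdef]
      exact Real.sqrt_lt_sqrt (by positivity) (by linarith)
    have hne : ∀ x : ℝ, R ≤ x → x ≠ L ∧ x ≠ -L :=
      fun x hx => ⟨ne_of_gt (by linarith), ne_of_gt (by linarith)⟩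
    have hws := decay_slope k R hk0 q q'
      (fun x => μ * q x + lam ^ 2 * q x - 2 * ψ x ^ 2 * q x)
      (fun x hx => hqd x (hne x hx).1 (hne x hx).2)
      (fun x hx => by
        have h1 := hR₀ x (le_trans hRR₀ hx)
        have h2 := hqpos x (le_trans hRx₀.le hx)
        have h3 := mul_le_mul_of_nonneg_right h1 h2.le
        rw [hk2]
        linarith)
      (fun x hx => hqpos x (le_trans hRx₀.le hx))
      hqtop
    have hψs := psi_slope L lam hL hlam ψ ψ' hψd hpos R hRL
    have hqs := hws R self_mem_Ici
    have hqRpos := hqpos R hRx₀.le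
    refine ⟨R, hRx₀, fun x hx => hqpos x hx.1, ψ R * q' R - ψ' R * q R, ?_, ?_⟩
    · have h1 : ψ R * q' R ≤ ψ R * (-(k * q R)) :=
        mul_le_mul_of_nonneg_left (by linarith) (hpos R).le
      have h2 : -lam * ψ R * q R ≤ ψ' R * q R :=
        mul_le_mul_of_nonneg_right hψs hqRpos.le
      nlinarith [mul_pos (hpos R) hqRpos]
    · have hd1 := hqd R (hne R le_rfl).1 (hne R le_rfl).2
      have hd2 := hψd R (hne R le_rfl).1 (hne R le_rfl).2
      have : ContinuousAt (fun x => ψ x * q' x - ψ' x * q x) R :=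
        ((hψc.continuousAt.mul hd1.2.continuousAt).sub
          (hd2.2.continuousAt.mul hqc.continuousAt))
      exact this.continuousWithinAt

/-- The core contradiction: a solution positive somewhere leads to a contradiction. -/
lemma core (ε L lam μ : ℝ) (hε : 0 < ε) (hL : 0 < L) (hlam : 0 < lam) (hμ : 0 < μ)
    (ψ ψ' q q' : ℝ → ℝ)
    (hψc : Continuous ψ)
    (hψtop : Tendsto ψ atTop (𝓝 0)) (hψbot : Tendsto ψ atBot (𝓝 0))
    (hψd : ∀ x : ℝ, x ≠ L → x ≠ -L →
      HasDerivAt ψ (ψ' x) x ∧ HasDerivAt ψ' (lam ^ 2 * ψ x - 2 * ψ x ^ 3) x)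
    (hψj : ∀ x : ℝ, x = L ∨ x = -L →
      ∃ a b : ℝ, Tendsto ψ' (𝓝[>] x) (𝓝 a) ∧ Tendsto ψ' (𝓝[<] x) (𝓝 b) ∧
        a - b = -ε * ψ x)
    (hpos : ∀ x : ℝ, 0 < ψ x)
    (hqc : Continuous q)
    (hqtop : Tendsto q atTop (𝓝 0)) (hqbot : Tendsto q atBot (𝓝 0))
    (hqd : ∀ x : ℝ, x ≠ L → x ≠ -L →
      HasDerivAt q (q' x) x ∧
      HasDerivAt q' (μ * q x + lam ^ 2 * q x - 2 * ψ x ^ 2 * q x) x)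
    (hqj : ∀ x : ℝ, x = L ∨ x = -L →
      ∃ a b : ℝ, Tendsto q' (𝓝[>] x) (𝓝 a) ∧ Tendsto q' (𝓝[<] x) (𝓝 b) ∧
        a - b = -ε * q x)
    (x₀ : ℝ) (hx₀ : 0 < q x₀) : False := by
  classical
  -- right side
  obtain ⟨v, hv1, hv2, c, hc, hcT⟩ := aux_right L lam μ hL hlam hμ ψ ψ' q q'
    hψc hψtop hψd
    (fun x hx => (hψj x hx).elim fun a hab => hab.elim fun b hb => ⟨b, hb.2.1⟩)
    hpos hqc hqtop hqd
    (fun x hx => (hqj x hx).elim fun a hab => hab.elim fun b hb => ⟨b, hb.2.1⟩)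
    x₀ hx₀
  -- reflected data
  set ψr : ℝ → ℝ := fun x => ψ (-x) with hψr
  set ψr' : ℝ → ℝ := fun x => -ψ' (-x) with hψr'
  set qr : ℝ → ℝ := fun x => q (-x) with hqr
  set qr' : ℝ → ℝ := fun x => -q' (-x) with hqr'
  have hrefl_ne : ∀ x : ℝ, x ≠ L → x ≠ -L → (-x ≠ L ∧ -x ≠ -L) := by
    intro x h1 h2
    constructor
    · intro h; apply h2; linarith [h]
    · intro h; apply h1; linarith [h]
  have hψrd : ∀ x : ℝ, x ≠ L → x ≠ -L →
      HasDerivAt ψr (ψr' x) x ∧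
      HasDerivAt ψr' (lam ^ 2 * ψr x - 2 * ψr x ^ 3) x := by
    intro x h1 h2
    obtain ⟨h3, h4⟩ := hrefl_ne x h1 h2
    constructor
    · have := (hψd (-x) h3 h4).1.comp x (hasDerivAt_neg x)
      simpa [Function.comp_def, Pi.neg_def, hψr, hψr'] using this
    · have := ((hψd (-x) h3 h4).2.comp x (hasDerivAt_neg x)).neg
      simpa [Function.comp_def, Pi.neg_def, hψr, hψr'] using this
  have hqrd : ∀ x : ℝ, x ≠ L → x ≠ -L →
      HasDerivAt qr (qr' x) x ∧
      HasDerivAt qr' (μ * qr x + lam ^ 2 * qr x - 2 * ψr x ^ 2 * qr x) x := by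
    intro x h1 h2
    obtain ⟨h3, h4⟩ := hrefl_ne x h1 h2
    constructor
    · have := (hqd (-x) h3 h4).1.comp x (hasDerivAt_neg x)
      simpa [Function.comp_def, Pi.neg_def, hqr, hqr'] using this
    · have := ((hqd (-x) h3 h4).2.comp x (hasDerivAt_neg x)).neg
      simpa [Function.comp_def, Pi.neg_def, hqr, hqr', hψr] using this
  have hcorner : ∀ x : ℝ, x = L ∨ x = -L → (-x = L ∨ -x = -L) := by
    rintro x (rfl | rfl)
    · right; ring
    · left; ring
  have hψrj : ∀ x : ℝ, x = L ∨ x = -L → ∃ b, Tendsto ψr' (𝓝[<] x) (𝓝 b) := by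
    intro x hx
    obtain ⟨a, b, ha, hb, hab⟩ := hψj (-x) (hcorner x hx)
    exact ⟨-a, (ha.comp (tendsto_neg_lt x)).neg⟩
  have hqrj : ∀ x : ℝ, x = L ∨ x = -L → ∃ b, Tendsto qr' (𝓝[<] x) (𝓝 b) := by
    intro x hx
    obtain ⟨a, b, ha, hb, hab⟩ := hqj (-x) (hcorner x hx)
    exact ⟨-a, (ha.comp (tendsto_neg_lt x)).neg⟩
  obtain ⟨vr, hvr1, hvr2, c', hc', hcT'⟩ := aux_right L lam μ hL hlam hμ ψr ψr' qr qr'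
    (hψc.comp continuous_neg)
    (hψbot.comp tendsto_neg_atTop_atBot)
    hψrd hψrj (fun x => hpos (-x))
    (hqc.comp continuous_neg)
    (hqbot.comp tendsto_neg_atTop_atBot)
    hqrd hqrj (-x₀) (by simpa [hqr] using hx₀)
  set u := -vr with hudef
  have huv : u < x₀ := by
    rw [hudef]; linarith
  have hu_lt_v : u < v := lt_trans huv hv1
  have hqIoo : ∀ x ∈ Ioo u v, 0 < q x := by
    intro x hx
    rcases le_or_gt x₀ x with h | h
    · exact hv2 x ⟨h, hx.2⟩
    · have : -x ∈ Ico (-x₀) vr := ⟨neg_le_neg h.le, by rw [hudef] at hx; linarith [hx.1]⟩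
      have := hvr2 (-x) this
      simpa [hqr] using this
  -- transfer the reflected Wronskian limit
  set Wf : ℝ → ℝ := fun x => ψ x * q' x - ψ' x * q x with hWf
  have hTu : Tendsto Wf (𝓝[>] u) (𝓝 (-c')) := by
    have h1 : Tendsto (fun x : ℝ => -x) (𝓝[>] u) (𝓝[<] vr) := by
      have := tendsto_neg_gt u
      rwa [show -u = vr by rw [hudef]; ring] at this
    have h2 := (hcT'.comp h1).neg
    refine h2.congr ?_
    intro x
    simp only [Function.comp, hψr, hψr', hqr, hqr', hWf, neg_neg]
    ring
  -- the continuous extension of the Wronskian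
  set Wt : ℝ → ℝ := fun x =>
    if x = L ∨ x = -L then limUnder (𝓝[<] x) Wf else Wf x with hWt
  have hWtEq : ∀ x : ℝ, x ≠ L → x ≠ -L → Wt x = Wf x := by
    intro x h1 h2
    rw [hWt]
    simp only
    rw [if_neg (by tauto)]
  have hWtd : ∀ x : ℝ, x ≠ L → x ≠ -L → HasDerivAt Wt (μ * (ψ x * q x)) x := by
    intro x h1 h2
    have hd1 := hqd x h1 h2
    have hd2 := hψd x h1 h2
    have hWfd : HasDerivAt Wf (μ * (ψ x * q x)) x := by
      have h3 := (hd2.1.mul hd1.2).sub (hd2.2.mul hd1.1)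
      refine h3.congr_deriv ?_
      ring
    refine hWfd.congr_of_eventuallyEq ?_
    have hopen : IsOpen {y : ℝ | y ≠ L ∧ y ≠ -L} :=
      (isOpen_compl_singleton).inter (isOpen_compl_singleton)
    filter_upwards [hopen.mem_nhds ⟨h1, h2⟩] with y hy
    exact hWtEq y hy.1 hy.2
  have hWtc : Continuous Wt := by
    rw [continuous_iff_continuousAt]
    intro x
    by_cases hx : x = L ∨ x = -L
    · obtain ⟨aψ, bψ, haψ, hbψ, hjψ⟩ := hψj x hx
      obtain ⟨aq, bq, haq, hbq, hjq⟩ := hqj x hx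
      have tψl : Tendsto ψ (𝓝[<] x) (𝓝 (ψ x)) := hψc.continuousAt.continuousWithinAt
      have tql : Tendsto q (𝓝[<] x) (𝓝 (q x)) := hqc.continuousAt.continuousWithinAt
      have tψr : Tendsto ψ (𝓝[>] x) (𝓝 (ψ x)) := hψc.continuousAt.continuousWithinAt
      have tqr : Tendsto q (𝓝[>] x) (𝓝 (q x)) := hqc.continuousAt.continuousWithinAt
      have hL1 : Tendsto Wf (𝓝[<] x) (𝓝 (ψ x * bq - bψ * q x)) :=
        (tψl.mul hbq).sub (hbψ.mul tql)
      have hR1 : Tendsto Wf (𝓝[>] x) (𝓝 (ψ x * aq - aψ * q x)) :=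
        (tψr.mul haq).sub (haψ.mul tqr)
      have hval : Wt x = ψ x * bq - bψ * q x := by
        rw [hWt]
        simp only
        rw [if_pos hx]
        exact hL1.limUnder_eq
      have hRL : ψ x * aq - aψ * q x = ψ x * bq - bψ * q x := by
        have e1 : aq = bq - ε * q x := by linarith
        have e2 : aψ = bψ - ε * ψ x := by linarith
        rw [e1, e2]; ring
      have hdecomp : 𝓝 x = (𝓝[<] x ⊔ 𝓝[>] x) ⊔ pure x := by
        rw [nhdsLT_sup_nhdsGT, nhdsNE_sup_pure]
      unfold ContinuousAt
      rw [hdecomp, tendsto_sup, tendsto_sup]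
      refine ⟨⟨?_, ?_⟩, ?_⟩
      · have hEE : Wf =ᶠ[𝓝[<] x] Wt := by
          filter_upwards [ev_ne_left x L, ev_ne_left x (-L)] with y h1 h2
          exact (hWtEq y h1 h2).symm
        rw [hval]
        exact hL1.congr' hEE
      · have hEE : Wf =ᶠ[𝓝[>] x] Wt := by
          filter_upwards [ev_ne_right x L, ev_ne_right x (-L)] with y h1 h2
          exact (hWtEq y h1 h2).symm
        rw [hval, ← hRL]
        exact hR1.congr' hEE
      · exact tendsto_pure_nhds Wt x
    · push_neg at hx
      exact (hWtd x hx.1 hx.2).continuousAt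
  -- endpoint values
  have hWtv : Wt v = c := by
    have h1 : Tendsto Wt (𝓝[<] v) (𝓝 (Wt v)) :=
      hWtc.continuousAt.continuousWithinAt
    have hEE : Wf =ᶠ[𝓝[<] v] Wt := by
      filter_upwards [ev_ne_left v L, ev_ne_left v (-L)] with y hy1 hy2
      exact (hWtEq y hy1 hy2).symm
    have h2 : Tendsto Wt (𝓝[<] v) (𝓝 c) := hcT.congr' hEE
    exact tendsto_nhds_unique h1 h2
  have hWtu : Wt u = -c' := by
    have h1 : Tendsto Wt (𝓝[>] u) (𝓝 (Wt u)) :=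
      hWtc.continuousAt.continuousWithinAt
    have hEE : Wf =ᶠ[𝓝[>] u] Wt := by
      filter_upwards [ev_ne_right u L, ev_ne_right u (-L)] with y hy1 hy2
      exact (hWtEq y hy1 hy2).symm
    have h2 : Tendsto Wt (𝓝[>] u) (𝓝 (-c')) := hTu.congr' hEE
    exact tendsto_nhds_unique h1 h2
  -- strict increase of Wt on [u, v]
  have hinc : Wt u < Wt v := by
    refine inc_except {L, -L} Wt u v hu_lt_v hWtc.continuousOn ?_
    intro x hx hxs
    have hx1 : x ≠ L := by
      intro h; apply hxs; simp [h]
    have hx2 : x ≠ -L := by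
      intro h; apply hxs; simp [h]
    exact ⟨μ * (ψ x * q x), mul_pos hμ (mul_pos (hpos x) (hqIoo x hx)), hWtd x hx1 hx2⟩
  rw [hWtu, hWtv] at hinc
  linarith

/-- for a strictly positive standing-wave profile `ψ`, the operator
`L₋ = d²/dx² + 2ψ² + εv - lam²` has no positive eigenvalue. -/
theorem LMinus_no_positive_eigenvalue (ε L lam : ℝ)
    (hε : 0 < ε) (hL : 0 < L) (hlam : 0 < lam)
    (ψ ψ' : ℝ → ℝ)
    (hψ : IsStandingWaveProfile ε L lam ψ ψ')
    (hpos : ∀ x : ℝ, 0 < ψ x) :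
    ¬∃ μ : ℝ, 0 < μ ∧
      ∃ q q' : ℝ → ℝ, q ≠ 0 ∧ Continuous q ∧
        Tendsto q atTop (𝓝 0) ∧ Tendsto q atBot (𝓝 0) ∧
        (∀ x : ℝ, x ≠ L → x ≠ -L →
          HasDerivAt q (q' x) x ∧
          HasDerivAt q' (μ * q x + lam ^ 2 * q x - 2 * ψ x ^ 2 * q x) x) ∧
        (∀ x : ℝ, x = L ∨ x = -L →
          ∃ a b : ℝ,
            Tendsto q' (𝓝[>] x) (𝓝 a) ∧
            Tendsto q' (𝓝[<] x) (𝓝 b) ∧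
            a - b = -ε * q x) := by
  rintro ⟨μ, hμ, q, q', hqne, hqc, hqtop, hqbot, hqd, hqj⟩
  obtain ⟨hψc, hψtop, hψbot, hψd, hψj⟩ := hψ
  have hx : ∃ x₀, q x₀ ≠ 0 := by
    by_contra h
    push_neg at h
    exact hqne (funext fun x => h x)
  obtain ⟨x₀, hx0⟩ := hx
  rcases hx0.lt_or_gt with hneg | hposq
  · -- use -q
    refine core ε L lam μ hε hL hlam hμ ψ ψ' (fun x => -q x) (fun x => -q' x)
      hψc hψtop hψbot hψd hψj hpos hqc.neg
      (by simpa using hqtop.neg) (by simpa using hqbot.neg) ?_ ?_ x₀ (by simpa using hneg)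
    · intro x h1 h2
      obtain ⟨hd1, hd2⟩ := hqd x h1 h2
      refine ⟨hd1.neg, ?_⟩
      have := hd2.neg
      refine this.congr_deriv ?_
      ring
    · intro x hx
      obtain ⟨a, b, ha, hb, hab⟩ := hqj x hx
      refine ⟨-a, -b, ha.neg, hb.neg, ?_⟩
      have hr : -ε * -q x = -(-ε * q x) := by ring
      rw [hr]
      linarith
  · exact core ε L lam μ hε hL hlam hμ ψ ψ' q q' hψc hψtop hψbot hψd hψj hpos
      hqc hqtop hqbot hqd hqj x₀ hposq
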